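/- For any triangle ABC with side lengths a = BC, b = CA, c = AB, and any two points X, Y in its plane, the inequality −a·AX·AY + b·BX·BY + c·CX·CY ≥ −a·b·c holds; equivalently a·AX·AY ≤ a·b·c + b·BX·BY + c·CX·CY. -/
import Mathlib

theorem stmt_8 (a b c x y : ℂ) (h : ¬ Collinear ℝ ({a, b, c} : Set ℂ)) :
    -(dist b c * dist a x * dist a y) + dist c a * dist b x * dist b y +
      dist a b * dist c x * dist c y ≥ -(dist b c * dist c a * dist a b) := by
  have key : (x-b)*(y-b)*(c-a) + (x-c)*(y-c)*(a-b)
      = -((a-b)*(b-c)*(c-a)) - (x-a)*(y-a)*(b-c) := by ring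
  have h1 : ‖(x-b)*(y-b)*(c-a) + (x-c)*(y-c)*(a-b)‖
      ≤ ‖(x-b)*(y-b)*(c-a)‖ + ‖(x-c)*(y-c)*(a-b)‖ := norm_add_le _ _
  have h2 : ‖(x-a)*(y-a)*(b-c)‖ - ‖(a-b)*(b-c)*(c-a)‖
      ≤ ‖(x-b)*(y-b)*(c-a) + (x-c)*(y-c)*(a-b)‖ := by
    rw [key]
    calc ‖(x-a)*(y-a)*(b-c)‖ - ‖(a-b)*(b-c)*(c-a)‖
        = ‖(x-a)*(y-a)*(b-c)‖ - ‖-((a-b)*(b-c)*(c-a))‖ := by rw [norm_neg]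
      _ ≤ ‖(x-a)*(y-a)*(b-c) - -((a-b)*(b-c)*(c-a))‖ := norm_sub_norm_le _ _
      _ = ‖-((a-b)*(b-c)*(c-a)) - (x-a)*(y-a)*(b-c)‖ := by
          rw [← norm_neg]; congr 1; ring
  simp only [dist_eq_norm, norm_mul] at *
  rw [norm_sub_rev a x, norm_sub_rev a y, norm_sub_rev b x, norm_sub_rev b y,
    norm_sub_rev c x, norm_sub_rev c y]
  linarith [h1, h2]
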